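/- arXiv:1105.5725 — 4 statements merged into one kernel-verified Lean document; each statement's English description precedes it below -/
import Mathlib

section
/- Let X be a set, x ∈ X a point, ι a nonempty index type, Y : ι → X, c : ι → ℝ with c(i) ≥ 0 for all i, and u : X → ℝ. Suppose the family (u(Y i) + c i)_{i ∈ ι} is bounded below and u(x) = inf_{i ∈ ι} ( u(Y i) + c i ). Then 1 − exp(−u(x)) = inf_{i ∈ ι} ( exp(−c i) · (1 − exp(−u(Y i))) + 1 − exp(−c i) ). -/
/-- Kruzkov-transform identity for Bellman-type equations:
if `u x = ⨅ i, (u (Y i) + c i)` with `c i ≥ 0` and the family bounded below, then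
`1 - exp (-(u x)) = ⨅ i, (exp (-(c i)) * (1 - exp (-(u (Y i)))) + 1 - exp (-(c i)))`. -/
theorem kruzkov_bellman {X : Type*} {ι : Type*} [Nonempty ι] (x : X)
    (Y : ι → X) (c : ι → ℝ) (hc : ∀ i, 0 ≤ c i) (u : X → ℝ)
    (hbdd : BddBelow (Set.range fun i => u (Y i) + c i))
    (hu : u x = ⨅ i, (u (Y i) + c i)) :
    1 - Real.exp (-(u x)) =
      ⨅ i, (Real.exp (-(c i)) * (1 - Real.exp (-(u (Y i)))) + 1 - Real.exp (-(c i))) := by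
  have hmono : Monotone fun t : ℝ => 1 - Real.exp (-t) := by
    intro a b hab
    simp only
    have := Real.exp_le_exp.mpr (neg_le_neg hab)
    linarith
  have hcont : ContinuousAt (fun t : ℝ => 1 - Real.exp (-t)) (⨅ i, (u (Y i) + c i)) := by
    fun_prop
  have key := hmono.map_ciInf_of_continuousAt hcont hbdd
  rw [hu, key]
  refine iInf_congr fun i => ?_
  have : Real.exp (-(u (Y i) + c i)) = Real.exp (-(c i)) * Real.exp (-(u (Y i))) := by
    rw [← Real.exp_add]; ring_nf
  simp only [this]; ring
end

section
/- In the abstract chain setting, for every point x ∈ X with x ∉ B, the set {y : R x y} is nonempty and the value function satisfies the dynamic programming principle V(x) = inf_{y : R x y} ( c(x,y) + V(y) ). -/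
/-- The set of total costs of admissible chains from `x`: finite sequences
`x = p 0, p 1, ..., p M` with `R (p m) (p (m+1))` for `m < M` and `p M ∈ B`,
with total cost `∑_{m<M} c (p m) (p (m+1)) + g (p M)`. -/
def chainCosts {X : Type*} (R : X → X → Prop) (B : Set X) (c : X → X → ℝ)
    (g : X → ℝ) (x : X) : Set ℝ :=
  {r | ∃ (M : ℕ) (p : ℕ → X), p 0 = x ∧ (∀ m < M, R (p m) (p (m + 1))) ∧ p M ∈ B ∧
    r = (∑ m ∈ Finset.range M, c (p m) (p (m + 1))) + g (p M)}

theorem chainCosts_bddBelow {X : Type*} (R : X → X → Prop) (B : Set X)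
    (c : X → X → ℝ) (g : X → ℝ) (hc : ∀ x y, 0 ≤ c x y)
    (hg : BddBelow (Set.range g)) (x : X) :
    BddBelow (chainCosts R B c g x) := by
  obtain ⟨b, hb⟩ := hg
  refine ⟨b, fun r hr => ?_⟩
  obtain ⟨M, p, _, _, _, rfl⟩ := hr
  have h1 : (0:ℝ) ≤ ∑ m ∈ Finset.range M, c (p m) (p (m + 1)) :=
    Finset.sum_nonneg fun m _ => hc _ _
  have h2 : b ≤ g (p M) := hb ⟨p M, rfl⟩
  linarith

/-- Dynamic programming principle: at every point `x ∉ B`, the set of successors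
`{y | R x y}` is nonempty and `V x = inf_{y : R x y} (c x y + V y)`. -/
theorem value_dpp {X : Type*} [Nonempty X] (R : X → X → Prop) (B : Set X)
    (c : X → X → ℝ) (g : X → ℝ) (hc : ∀ x y, 0 ≤ c x y)
    (hg : BddBelow (Set.range g))
    (hchain : ∀ x, (chainCosts R B c g x).Nonempty)
    (V : X → ℝ) (hV : ∀ x, V x = sInf (chainCosts R B c g x))
    (x : X) (hx : x ∉ B) :
    {y | R x y}.Nonempty ∧ V x = sInf ((fun y => c x y + V y) '' {y | R x y}) := by
  have hbdd := chainCosts_bddBelow R B c g hc hg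
  -- decompose any chain from x
  have decomp : ∀ r ∈ chainCosts R B c g x,
      ∃ y, R x y ∧ ∃ r' ∈ chainCosts R B c g y, r = c x y + r' := by
    intro r hr
    obtain ⟨M, p, hp0, hstep, hpB, rfl⟩ := hr
    cases M with
    | zero => exact absurd hpB (hp0 ▸ hx)
    | succ N =>
      refine ⟨p 1, hp0 ▸ hstep 0 (Nat.succ_pos N),
        (∑ m ∈ Finset.range N, c (p (m+1)) (p (m+2))) + g (p (N+1)),
        ⟨N, fun n => p (n+1), rfl, fun m hm => hstep (m+1) (by omega), hpB, rfl⟩, ?_⟩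
      rw [Finset.sum_range_succ' (fun m => c (p m) (p (m+1))) N, hp0]
      ring
  constructor
  · obtain ⟨r, hr⟩ := hchain x
    obtain ⟨y, hy, _⟩ := decomp r hr
    exact ⟨y, hy⟩
  rw [hV x]
  apply le_antisymm
  · -- sInf chainCosts x ≤ each c x y + V y
    apply le_csInf
    · obtain ⟨r, hr⟩ := hchain x
      obtain ⟨y, hy, r', hr', _⟩ := decomp r hr
      exact ⟨c x y + V y, y, hy, rfl⟩
    rintro t ⟨y, hy, rfl⟩
    dsimp only
    rw [hV y]
    have : sInf (chainCosts R B c g x) - c x y ≤ sInf (chainCosts R B c g y) := by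
      apply le_csInf (hchain y)
      intro r' hr'
      have hmem : c x y + r' ∈ chainCosts R B c g x := by
        obtain ⟨M, p, hp0, hstep, hpB, rfl⟩ := hr'
        refine ⟨M + 1, fun n => if n = 0 then x else p (n - 1), by simp, ?_, by simpa, ?_⟩
        · intro m hm
          cases m with
          | zero => simpa [hp0]
          | succ k => simpa using hstep k (by omega)
        · rw [Finset.sum_range_succ' (fun m =>
            c (if m = 0 then x else p (m-1)) (if m + 1 = 0 then x else p (m+1-1)))]
          simp [hp0]
          ring
      have := csInf_le (hbdd x) hmem
      linarith
    linarith
  · -- sInf image ≤ sInf chainCosts x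
    apply le_csInf (hchain x)
    intro r hr
    obtain ⟨y, hy, r', hr', rfl⟩ := decomp r hr
    have h1 : V y ≤ r' := by rw [hV y]; exact csInf_le (hbdd y) hr'
    have h2 : sInf ((fun y => c x y + V y) '' {y | R x y}) ≤ c x y + V y := by
      apply csInf_le
      · obtain ⟨b, hb⟩ := hg
        refine ⟨b, ?_⟩
        rintro t ⟨z, hz, rfl⟩
        have : b ≤ sInf (chainCosts R B c g z) :=
          le_csInf (hchain z) fun r'' hr'' => by
            obtain ⟨M, p, _, _, _, rfl⟩ := hr''
            have : (0:ℝ) ≤ ∑ m ∈ Finset.range M, c (p m) (p (m+1)) :=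
              Finset.sum_nonneg fun m _ => hc _ _
            have := hb ⟨p M, rfl⟩
            linarith
        have := hc x z
        dsimp only
        rw [hV z]
        linarith
      · exact ⟨y, hy, rfl⟩
    linarith
end

section
/- In the single-edge semi-discrete setting, for every h > 0 the value function u_h is Lipschitz continuous on [0,l] with a constant independent of h: for all x₁, x₂ ∈ [0,l], |u_h(x₁) − u_h(x₂)| ≤ ( sup_{s ∈ [0,l]} f(s) ) · |x₁ − x₂|. -/
/-- The set of costs of admissible discrete paths from `x` on the edge `[0, l]`:
finite sequences `x = t 0, t 1, ..., t M` in `[0, l]` with steps of length at most `h`,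
ending at a boundary point `0` or `l`, of cost
`∑_{m<M} f (t m) * |t (m+1) - t m| + g (t M)` with `g 0 = g0`, `g l = gl`. -/
def edgeChainCosts (l h : ℝ) (f : ℝ → ℝ) (g0 gl : ℝ) (x : ℝ) : Set ℝ :=
  {r | ∃ (M : ℕ) (t : ℕ → ℝ), t 0 = x ∧ (∀ m ≤ M, t m ∈ Set.Icc 0 l) ∧
    (∀ m < M, |t (m + 1) - t m| ≤ h) ∧ (t M = 0 ∨ t M = l) ∧
    r = (∑ m ∈ Finset.range M, f (t m) * |t (m + 1) - t m|) +
      (if t M = 0 then g0 else gl)}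

lemma edgeChainCosts_nonempty (l h : ℝ) (hh : 0 < h) (f : ℝ → ℝ) (g0 gl : ℝ)
    (x : ℝ) (hx : x ∈ Set.Icc 0 l) : (edgeChainCosts l h f g0 gl x).Nonempty := by
  obtain ⟨hx0, hxl⟩ := hx
  set N := ⌈x / h⌉₊ with hN
  set t : ℕ → ℝ := fun m => max (x - m * h) 0 with ht
  have hxN : x ≤ N * h := by
    have h1 := Nat.le_ceil (x / h)
    rw [div_le_iff₀ hh] at h1
    exact h1
  have htN : t N = 0 := max_eq_right (by linarith)
  refine ⟨_, N, t, ?_, ?_, ?_, Or.inl htN, rfl⟩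
  · simp [t, hx0]
  · intro m _
    constructor
    · exact le_max_right _ _
    · have : x - m * h ≤ l := by
        have : (0:ℝ) ≤ m * h := by positivity
        linarith
      exact max_le (by linarith) (by linarith)
  · intro m _
    simp only [t]
    push_cast
    have h2 := abs_max_sub_max_le_abs (x - ((m:ℝ) + 1) * h) (x - (m:ℝ) * h) 0
    have h3 : |(x - ((m:ℝ) + 1) * h) - (x - (m:ℝ) * h)| = h := by
      rw [show (x - ((m:ℝ) + 1) * h) - (x - (m:ℝ) * h) = -h by ring, abs_neg,
        abs_of_pos hh]
    linarith

lemma edgeChainCosts_bddBelow (l h η : ℝ) (f : ℝ → ℝ) (hη : 0 < η)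
    (hfη : ∀ s ∈ Set.Icc 0 l, η ≤ f s) (g0 gl : ℝ) (x : ℝ) :
    BddBelow (edgeChainCosts l h f g0 gl x) := by
  refine ⟨min g0 gl, ?_⟩
  rintro r ⟨M, t, -, htmem, -, -, rfl⟩
  have hsum : (0:ℝ) ≤ ∑ m ∈ Finset.range M, f (t m) * |t (m + 1) - t m| := by
    apply Finset.sum_nonneg
    intro m hm
    have hmem := htmem m (Finset.mem_range.1 hm).le
    have h0 : 0 ≤ f (t m) := le_trans hη.le (hfη _ hmem)
    exact mul_nonneg h0 (abs_nonneg _)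
  have : min g0 gl ≤ (if t M = 0 then g0 else gl) := by
    split <;> [exact min_le_left _ _; exact min_le_right _ _]
  linarith

lemma edge_value_key (l h η : ℝ) (hl : 0 < l) (hh : 0 < h)
    (f : ℝ → ℝ) (hf : Continuous f) (hη : 0 < η) (hfη : ∀ s ∈ Set.Icc 0 l, η ≤ f s)
    (g0 gl : ℝ) (x₁ x₂ : ℝ) (hx₁ : x₁ ∈ Set.Icc 0 l) (hx₂ : x₂ ∈ Set.Icc 0 l) :
    sInf (edgeChainCosts l h f g0 gl x₁) ≤ sInf (edgeChainCosts l h f g0 gl x₂) +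
      sSup (f '' Set.Icc 0 l) * |x₁ - x₂| := by
  set K := sSup (f '' Set.Icc 0 l) with hKdef
  have hbdd : BddAbove (f '' Set.Icc 0 l) := (isCompact_Icc.image hf).bddAbove
  have hK : ∀ s ∈ Set.Icc 0 l, f s ≤ K := fun s hs => le_csSup hbdd ⟨s, hs, rfl⟩
  set D := |x₂ - x₁| with hDdef
  have hD0 : 0 ≤ D := abs_nonneg _
  set σ : ℝ := if x₁ ≤ x₂ then 1 else -1 with hσdef
  have hσcases : σ = 1 ∧ D = x₂ - x₁ ∨ σ = -1 ∧ D = x₁ - x₂ := by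
    by_cases hc : x₁ ≤ x₂
    · exact Or.inl ⟨if_pos hc, abs_of_nonneg (by linarith)⟩
    · exact Or.inr ⟨if_neg hc, abs_of_nonpos (by linarith) |>.trans (by ring)⟩
  have hσx2 : x₁ + σ * D = x₂ := by rcases hσcases with ⟨h1, h2⟩ | ⟨h1, h2⟩ <;>
    rw [h1, h2] <;> ring
  set N := ⌈D / h⌉₊ with hNdef
  have hND : D ≤ N * h := by
    rw [← div_le_iff₀ hh]
    exact Nat.le_ceil _
  set v : ℕ → ℝ := fun m => x₁ + σ * min (m * h) D with hvdef
  have hv0 : v 0 = x₁ := by simp [v, min_eq_left hD0]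
  have hvN : v N = x₂ := by
    simp only [v, min_eq_right hND]
    exact hσx2
  have hvmem : ∀ m, v m ∈ Set.Icc 0 l := by
    intro m
    have h1 : (0:ℝ) ≤ min (m * h) D := le_min (by positivity) hD0
    have h2 : min ((m:ℝ) * h) D ≤ D := min_le_right _ _
    obtain ⟨h10, h1l⟩ := hx₁; obtain ⟨h20, h2l⟩ := hx₂
    rcases hσcases with ⟨hs, hd⟩ | ⟨hs, hd⟩ <;>
      simp only [v, hs] <;> constructor <;> nlinarith
  -- step quantities
  set δ : ℕ → ℝ := fun m => min ((m + 1 : ℕ) * h) D - min ((m:ℝ) * h) D with hδdef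
  have hδ0 : ∀ m, 0 ≤ δ m := by
    intro m
    have hmm : ((m:ℝ)) * h ≤ ((m:ℝ) + 1) * h := by nlinarith
    have hmin : min ((m:ℝ) * h) D ≤ min (((m:ℝ) + 1) * h) D := min_le_min hmm le_rfl
    simp only [δ]
    push_cast
    linarith
  have hδh : ∀ m, δ m ≤ h := by
    intro m
    have h1 : min (((m:ℝ) + 1) * h) D ≤ min ((m:ℝ) * h + h) (D + h) := by
      apply min_le_min (by nlinarith) (by linarith)
    simp only [δ]
    push_cast
    rw [min_add_add_right] at h1
    linarith
  have hvstep : ∀ m, v (m + 1) - v m = σ * δ m := by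
    intro m; simp only [v, δ]; push_cast; ring
  have hσabs : |σ| = 1 := by rcases hσcases with ⟨hs, -⟩ | ⟨hs, -⟩ <;> simp [hs]
  have hvstepabs : ∀ m, |v (m + 1) - v m| = δ m := by
    intro m; rw [hvstep, abs_mul, hσabs, one_mul, abs_of_nonneg (hδ0 m)]
  have hδsum : ∑ m ∈ Finset.range N, δ m = D := by
    have := Finset.sum_range_sub (fun m => min ((m:ℝ) * h) D) N
    simp only [δ]
    rw [this]
    rw [min_eq_right hND]
    simp [min_eq_left hD0]
  -- main estimate via path concatenation
  have hkey : ∀ r ∈ edgeChainCosts l h f g0 gl x₂,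
      ∃ r' ∈ edgeChainCosts l h f g0 gl x₁, r' ≤ r + K * D := by
    rintro r ⟨M, t, ht0, htmem, htstep, htend, rfl⟩
    set u : ℕ → ℝ := fun m => if m < N then v m else t (m - N) with hudef
    have hut : ∀ m, N ≤ m → u m = t (m - N) := by
      intro m hm; simp [u, Nat.not_lt.2 hm]
    have huv : ∀ m ≤ N, u m = v m := by
      intro m hm
      rcases lt_or_eq_of_le hm with hlt | rfl
      · simp [u, hlt]
      · rw [hut _ le_rfl, Nat.sub_self, ht0, hvN]
    have hu0 : u 0 = x₁ := by rw [huv 0 (Nat.zero_le _), hv0]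
    have huNM : u (N + M) = t M := by rw [hut _ (Nat.le_add_right _ _), Nat.add_sub_cancel_left]
    refine ⟨_, ⟨N + M, u, hu0, ?_, ?_, ?_, rfl⟩, ?_⟩
    · intro m _
      by_cases hm : m < N
      · rw [huv m hm.le]; exact hvmem m
      · rw [hut m (Nat.not_lt.1 hm)]
        exact htmem _ (by omega)
    · intro m hm
      by_cases hmN : m + 1 ≤ N
      · rw [huv (m+1) hmN, huv m (by omega), hvstepabs]
        exact hδh m
      · have hNm : N ≤ m := by omega
        rw [hut (m+1) (by omega), hut m hNm,
          show m + 1 - N = (m - N) + 1 by omega]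
        exact htstep _ (by omega)
    · rw [huNM]; exact htend
    · rw [huNM]
      have hsplit := Finset.sum_range_add (fun m => f (u m) * |u (m + 1) - u m|) N M
      rw [hsplit]
      have hshift : ∀ m ∈ Finset.range M,
          f (u (N + m)) * |u (N + m + 1) - u (N + m)| = f (t m) * |t (m + 1) - t m| := by
        intro m _
        rw [hut (N + m) (Nat.le_add_right _ _), hut (N + m + 1) (by omega),
          Nat.add_sub_cancel_left, show N + m + 1 - N = m + 1 by omega]
      rw [Finset.sum_congr rfl hshift]
      have hpre : ∑ m ∈ Finset.range N, f (u m) * |u (m + 1) - u m| ≤ K * D := by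
        calc ∑ m ∈ Finset.range N, f (u m) * |u (m + 1) - u m|
            ≤ ∑ m ∈ Finset.range N, K * δ m := by
              apply Finset.sum_le_sum
              intro m hm
              have hmN := Finset.mem_range.1 hm
              rw [huv m hmN.le, huv (m+1) hmN, hvstepabs]
              exact mul_le_mul_of_nonneg_right (hK _ (hvmem m)) (hδ0 m)
          _ = K * D := by rw [← Finset.mul_sum, hδsum]
      linarith
  -- conclude via csInf
  have hne2 : (edgeChainCosts l h f g0 gl x₂).Nonempty :=
    edgeChainCosts_nonempty l h hh f g0 gl x₂ hx₂
  have hbdd1 : BddBelow (edgeChainCosts l h f g0 gl x₁) :=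
    edgeChainCosts_bddBelow l h η f hη hfη g0 gl x₁
  rw [show |x₁ - x₂| = D from abs_sub_comm x₁ x₂, ← sub_le_iff_le_add]
  apply le_csInf hne2
  intro r hr
  obtain ⟨r', hr', hle⟩ := hkey r hr
  rw [sub_le_iff_le_add]
  exact (csInf_le hbdd1 hr').trans hle

/-- Uniform-in-`h` Lipschitz estimate for the single-edge semi-discrete value function:
`|u_h x₁ - u_h x₂| ≤ (sup_{[0,l]} f) * |x₁ - x₂|`. -/
theorem edge_value_lipschitz (l h η : ℝ) (hl : 0 < l) (hh : 0 < h)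
    (f : ℝ → ℝ) (hf : Continuous f) (hη : 0 < η) (hfη : ∀ s ∈ Set.Icc 0 l, η ≤ f s)
    (g0 gl : ℝ) (x₁ x₂ : ℝ) (hx₁ : x₁ ∈ Set.Icc 0 l) (hx₂ : x₂ ∈ Set.Icc 0 l) :
    |sInf (edgeChainCosts l h f g0 gl x₁) - sInf (edgeChainCosts l h f g0 gl x₂)| ≤
      sSup (f '' Set.Icc 0 l) * |x₁ - x₂| := by
  have h1 := edge_value_key l h η hl hh f hf hη hfη g0 gl x₁ x₂ hx₁ hx₂
  have h2 := edge_value_key l h η hl hh f hf hη hfη g0 gl x₂ x₁ hx₂ hx₁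
  rw [abs_sub_comm x₂ x₁] at h2
  rw [abs_sub_le_iff]
  constructor <;> linarith
end

section
/- In the single-edge semi-discrete setting, assume in addition the compatibility condition |g₀ − g_l| ≤ ∫₀ˡ f(s) ds. Then, as h → 0⁺, the value functions u_h converge uniformly on [0,l] to the function u(x) = min( g₀ + ∫₀ˣ f(s) ds , g_l + ∫ₓˡ f(s) ds ). -/
open Filter Topology

/-- Per-step estimate: the one-point Riemann term is close to the integral. -/
lemma edge_step_est {l ε δ : ℝ} {f : ℝ → ℝ} (hf : Continuous f)
    (hUC : ∀ s ∈ Set.Icc (0:ℝ) l, ∀ t ∈ Set.Icc (0:ℝ) l, |s - t| ≤ δ → |f s - f t| ≤ ε)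
    {a b : ℝ} (ha : a ∈ Set.Icc (0:ℝ) l) (hb : b ∈ Set.Icc (0:ℝ) l) (hab : |b - a| ≤ δ) :
    |f a * (b - a) - ∫ s in a..b, f s| ≤ ε * |b - a| := by
  have h1 : f a * (b - a) = ∫ s in a..b, (fun _ : ℝ => f a) s := by
    rw [intervalIntegral.integral_const]; rw [smul_eq_mul]; ring
  rw [h1, ← intervalIntegral.integral_sub (intervalIntegrable_const) (hf.intervalIntegrable a b)]
  have := intervalIntegral.norm_integral_le_of_norm_le_const
    (a := a) (b := b) (C := ε) (f := fun s => f a - f s) ?_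
  · simpa using this
  · intro x hx
    have hx' : x ∈ Set.uIcc a b := Set.Ioc_subset_Icc_self hx
    have hxI : x ∈ Set.Icc (0:ℝ) l := Set.uIcc_subset_Icc ha hb hx'
    have hax : |a - x| ≤ δ := by
      rcases Set.mem_uIoc.1 hx with ⟨h1', h2'⟩ | ⟨h1', h2'⟩ <;>
        · rw [abs_le]; have := abs_le.1 hab; constructor <;> linarith [this.1, this.2]
    simpa using hUC a ha x hxI hax

/-- Existence of a monotone chain from `x` to `y` with good cost. -/
lemma edge_chain_exists {l ε δ h : ℝ} {f : ℝ → ℝ} (hf : Continuous f)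
    (hUC : ∀ s ∈ Set.Icc (0:ℝ) l, ∀ t ∈ Set.Icc (0:ℝ) l, |s - t| ≤ δ → |f s - f t| ≤ ε)
    (hh : 0 < h) (hhδ : h ≤ δ)
    {x y : ℝ} (hx : x ∈ Set.Icc (0:ℝ) l) (hy : y ∈ Set.Icc (0:ℝ) l) :
    ∃ (M : ℕ) (t : ℕ → ℝ), t 0 = x ∧ (∀ m ≤ M, t m ∈ Set.Icc (0:ℝ) l) ∧
      (∀ m < M, |t (m + 1) - t m| ≤ h) ∧ t M = y ∧
      (∑ m ∈ Finset.range M, f (t m) * |t (m + 1) - t m|) ≤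
        (∫ s in (min x y)..(max x y), f s) + ε * |y - x| := by
  rcases eq_or_ne x y with rfl | hxy
  · exact ⟨0, fun _ => x, rfl, fun m _ => hx, fun m hm => absurd hm (by omega), rfl, by simp⟩
  set N : ℕ := ⌈|y - x| / h⌉₊ with hN
  have hyx : 0 < |y - x| := abs_pos.2 (sub_ne_zero.2 (Ne.symm hxy))
  have hNpos : 0 < N := Nat.ceil_pos.2 (div_pos hyx hh)
  have hNR : (0:ℝ) < N := by exact_mod_cast hNpos
  set d : ℝ := (y - x) / N with hd
  have hdabs : |d| = |y - x| / N := by rw [hd, abs_div, abs_of_pos hNR]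
  have hdh : |d| ≤ h := by
    rw [hdabs, div_le_iff₀ hNR]
    have h1 : |y - x| / h ≤ N := Nat.le_ceil _
    calc |y - x| = (|y - x| / h) * h := by field_simp
      _ ≤ (N:ℝ) * h := by gcongr
      _ = h * N := by ring
  set t : ℕ → ℝ := fun m => x + (min m N : ℕ) * d with ht
  have ht0 : t 0 = x := by simp [ht]
  have hNd : (N:ℝ) * d = y - x := by rw [hd]; field_simp [hNR.ne']
  have htm : ∀ m ≤ N, t m ∈ Set.Icc (0:ℝ) l := by
    intro m hm
    show x + ((min m N : ℕ) : ℝ) * d ∈ Set.Icc (0:ℝ) l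
    rw [min_eq_left hm]
    have h1 : (m:ℝ) ≤ N := by exact_mod_cast hm
    have h2 : (0:ℝ) ≤ m := by positivity
    rcases le_or_gt 0 d with hd0 | hd0
    · exact ⟨by nlinarith [hx.1], by nlinarith [hy.2]⟩
    · exact ⟨by nlinarith [hy.1], by nlinarith [hx.2]⟩
  have hstep : ∀ m < N, t (m + 1) - t m = d := by
    intro m hm
    show (x + ((min (m+1) N : ℕ) : ℝ) * d) - (x + ((min m N : ℕ) : ℝ) * d) = d
    rw [min_eq_left (le_of_lt hm), min_eq_left hm]
    push_cast; ring
  have htN : t N = y := by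
    show x + ((min N N : ℕ) : ℝ) * d = y
    rw [min_self]; rw [hNd]; ring
  have hsteph : ∀ m < N, |t (m + 1) - t m| ≤ h := by
    intro m hm; rw [hstep m hm]; exact hdh
  have hint : ∀ m < N, IntervalIntegrable f MeasureTheory.volume (t m) (t (m+1)) :=
    fun m _ => hf.intervalIntegrable _ _
  have htel : ∑ m ∈ Finset.range N, ∫ s in (t m)..(t (m+1)), f s = ∫ s in x..y, f s := by
    rw [intervalIntegral.sum_integral_adjacent_intervals hint, ht0, htN]
  refine ⟨N, t, ht0, htm, hsteph, htN, ?_⟩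
  have hper : ∀ m ∈ Finset.range N, f (t m) * |t (m+1) - t m|
      ≤ (if 0 ≤ d then (∫ s in (t m)..(t (m+1)), f s) else -(∫ s in (t m)..(t (m+1)), f s))
        + ε * |d| := by
    intro m hm
    rw [Finset.mem_range] at hm
    have hest := edge_step_est hf hUC (htm m (le_of_lt hm)) (htm (m+1) hm)
      (by rw [hstep m hm]; exact le_trans hdh hhδ)
    rw [hstep m hm] at hest ⊢
    have h1 := (abs_le.1 hest).1
    have h2 := (abs_le.1 hest).2
    rcases le_or_gt 0 d with hd0 | hd0
    · rw [if_pos hd0, abs_of_nonneg hd0]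
      rw [abs_of_nonneg hd0] at h1 h2
      linarith
    · rw [if_neg (not_le.2 hd0), abs_of_neg hd0]
      rw [abs_of_neg hd0] at h1 h2
      have hre : f (t m) * -d = -(f (t m) * d) := by ring
      rw [hre]
      linarith
  calc ∑ m ∈ Finset.range N, f (t m) * |t (m+1) - t m|
      ≤ ∑ m ∈ Finset.range N,
        ((if 0 ≤ d then (∫ s in (t m)..(t (m+1)), f s) else -(∫ s in (t m)..(t (m+1)), f s))
          + ε * |d|) := Finset.sum_le_sum hper
    _ ≤ (∫ s in (min x y)..(max x y), f s) + ε * |y - x| := by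
        have hNd' : (N:ℝ) * (ε * |d|) = ε * |y - x| := by
          have : (N:ℝ) * |d| = |y - x| := by rw [hdabs]; field_simp
          rw [← this]; ring
        rcases le_or_gt 0 d with hd0 | hd0
        · have hxy' : x ≤ y := by nlinarith
          simp only [if_pos hd0]
          rw [Finset.sum_add_distrib, htel, Finset.sum_const, Finset.card_range, nsmul_eq_mul,
            min_eq_left hxy', max_eq_right hxy']
          linarith
        · have hxy' : y ≤ x := by nlinarith
          simp only [if_neg (not_le.2 hd0)]
          rw [Finset.sum_add_distrib, Finset.sum_neg_distrib, htel, Finset.sum_const,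
            Finset.card_range, nsmul_eq_mul, min_eq_right hxy', max_eq_left hxy',
            ← intervalIntegral.integral_symm]
          linarith

/-- Lower bounds for the cost of any admissible chain. -/
lemma edge_chain_lower {l ε δ h η : ℝ} {f : ℝ → ℝ} (hf : Continuous f)
    (hfη : ∀ s ∈ Set.Icc (0:ℝ) l, η ≤ f s) (hη : 0 ≤ η)
    (hUC : ∀ s ∈ Set.Icc (0:ℝ) l, ∀ t ∈ Set.Icc (0:ℝ) l, |s - t| ≤ δ → |f s - f t| ≤ ε)
    (hhδ : h ≤ δ)
    {M : ℕ} {t : ℕ → ℝ} (htm : ∀ m ≤ M, t m ∈ Set.Icc (0:ℝ) l)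
    (hst : ∀ m < M, |t (m + 1) - t m| ≤ h) :
    η * (∑ m ∈ Finset.range M, |t (m + 1) - t m|) ≤
        (∑ m ∈ Finset.range M, f (t m) * |t (m + 1) - t m|) ∧
    (∫ s in (t 0)..(t M), f s) - ε * (∑ m ∈ Finset.range M, |t (m + 1) - t m|) ≤
        (∑ m ∈ Finset.range M, f (t m) * |t (m + 1) - t m|) ∧
    (∫ s in (t M)..(t 0), f s) - ε * (∑ m ∈ Finset.range M, |t (m + 1) - t m|) ≤
        (∑ m ∈ Finset.range M, f (t m) * |t (m + 1) - t m|) := by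
  have hint : ∀ m < M, IntervalIntegrable f MeasureTheory.volume (t m) (t (m+1)) :=
    fun m _ => hf.intervalIntegrable _ _
  have htel : ∑ m ∈ Finset.range M, ∫ s in (t m)..(t (m+1)), f s = ∫ s in (t 0)..(t M), f s :=
    intervalIntegral.sum_integral_adjacent_intervals hint
  have key : ∀ m ∈ Finset.range M,
      ((∫ s in (t m)..(t (m+1)), f s) - ε * |t (m+1) - t m| ≤ f (t m) * |t (m+1) - t m|) ∧
      (-(∫ s in (t m)..(t (m+1)), f s) - ε * |t (m+1) - t m| ≤ f (t m) * |t (m+1) - t m|) ∧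
      (η * |t (m+1) - t m| ≤ f (t m) * |t (m+1) - t m|) := by
    intro m hm
    rw [Finset.mem_range] at hm
    have ha := htm m (le_of_lt hm)
    have hb := htm (m+1) hm
    have hest := edge_step_est hf hUC ha hb (le_trans (hst m hm) hhδ)
    have h1 := (abs_le.1 hest).1
    have h2 := (abs_le.1 hest).2
    have habs : f (t m) * |t (m+1) - t m| = |f (t m) * (t (m+1) - t m)| := by
      rw [abs_mul, abs_of_nonneg (le_trans hη (hfη _ ha))]
    refine ⟨?_, ?_, ?_⟩
    · rw [habs]
      have := le_abs_self (f (t m) * (t (m+1) - t m))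
      linarith
    · rw [habs]
      have := neg_abs_le (f (t m) * (t (m+1) - t m))
      linarith
    · exact mul_le_mul_of_nonneg_right (hfη _ ha) (abs_nonneg _)
  refine ⟨?_, ?_, ?_⟩
  · rw [Finset.mul_sum]
    exact Finset.sum_le_sum (fun m hm => (key m hm).2.2)
  · calc (∫ s in (t 0)..(t M), f s) - ε * (∑ m ∈ Finset.range M, |t (m + 1) - t m|)
        = ∑ m ∈ Finset.range M,
            ((∫ s in (t m)..(t (m+1)), f s) - ε * |t (m+1) - t m|) := by
          rw [Finset.sum_sub_distrib, htel, ← Finset.mul_sum]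
      _ ≤ _ := Finset.sum_le_sum (fun m hm => (key m hm).1)
  · calc (∫ s in (t M)..(t 0), f s) - ε * (∑ m ∈ Finset.range M, |t (m + 1) - t m|)
        = ∑ m ∈ Finset.range M,
            (-(∫ s in (t m)..(t (m+1)), f s) - ε * |t (m+1) - t m|) := by
          rw [Finset.sum_sub_distrib, Finset.sum_neg_distrib, htel, ← Finset.mul_sum,
            ← intervalIntegral.integral_symm]
      _ ≤ _ := Finset.sum_le_sum (fun m hm => (key m hm).2.1)

/-- Convergence of the single-edge semi-discrete scheme: under the compatibility
condition `|g0 - gl| ≤ ∫₀ˡ f`, the value functions `u_h` converge uniformly on `[0, l]`,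
as `h → 0⁺`, to `u x = min (g0 + ∫₀ˣ f) (gl + ∫ₓˡ f)`. -/
theorem edge_value_convergence (l η : ℝ) (hl : 0 < l)
    (f : ℝ → ℝ) (hf : Continuous f) (hη : 0 < η) (hfη : ∀ s ∈ Set.Icc 0 l, η ≤ f s)
    (g0 gl : ℝ) (hcomp : |g0 - gl| ≤ ∫ s in (0 : ℝ)..l, f s) :
    TendstoUniformlyOn (fun h x => sInf (edgeChainCosts l h f g0 gl x))
      (fun x => min (g0 + ∫ s in (0 : ℝ)..x, f s) (gl + ∫ s in x..l, f s))
      (𝓝[>] 0) (Set.Icc 0 l) := by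
  have hfnn : ∀ s ∈ Set.Icc (0:ℝ) l, 0 ≤ f s := fun s hs => le_trans hη.le (hfη s hs)
  set I : ℝ := ∫ s in (0:ℝ)..l, f s with hI
  have hInn : 0 ≤ I := intervalIntegral.integral_nonneg hl.le hfnn
  set L0 : ℝ := (max g0 gl + I + 1 - min g0 gl) / η with hL0
  have hL0nn : 0 ≤ L0 := by
    apply div_nonneg _ hη.le
    have := min_le_max (a := g0) (b := gl)
    linarith
  set K : ℝ := max l L0 with hK
  have hKpos : 0 < K := lt_of_lt_of_le hl (le_max_left _ _)
  rw [Metric.tendstoUniformlyOn_iff]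
  intro ε' hε'
  set ε : ℝ := ε' / (2 * (K + 1)) with hε
  have hεpos : 0 < ε := by positivity
  have hεK : ε * K < ε' := by
    rw [hε]
    rw [div_mul_eq_mul_div, div_lt_iff₀ (by positivity)]
    nlinarith
  have hUCf : UniformContinuousOn f (Set.Icc 0 l) :=
    isCompact_Icc.uniformContinuousOn_of_continuous hf.continuousOn
  obtain ⟨δ, hδpos, hUC0⟩ := Metric.uniformContinuousOn_iff_le.1 hUCf ε hεpos
  have hUC : ∀ s ∈ Set.Icc (0:ℝ) l, ∀ t ∈ Set.Icc (0:ℝ) l, |s - t| ≤ δ → |f s - f t| ≤ ε := by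
    intro s hs t ht hst
    have := hUC0 s hs t ht (by rwa [Real.dist_eq])
    rwa [Real.dist_eq] at this
  filter_upwards [Ioc_mem_nhdsGT_of_mem ⟨le_refl (0:ℝ), hδpos⟩] with h hh x hx
  have hhpos : 0 < h := hh.1
  have hhδ : h ≤ δ := hh.2
  have h0m : (0:ℝ) ∈ Set.Icc (0:ℝ) l := ⟨le_refl _, hl.le⟩
  have hlm : l ∈ Set.Icc (0:ℝ) l := ⟨hl.le, le_refl _⟩
  -- the value of the limit function at x
  set u : ℝ := min (g0 + ∫ s in (0:ℝ)..x, f s) (gl + ∫ s in x..l, f s) with hu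
  -- the set is bounded below
  have hbdd : BddBelow (edgeChainCosts l h f g0 gl x) := by
    refine ⟨min g0 gl, ?_⟩
    rintro r ⟨M, t, ht0, htm, hstep, hend, rfl⟩
    have hS : 0 ≤ ∑ m ∈ Finset.range M, f (t m) * |t (m+1) - t m| := by
      apply Finset.sum_nonneg
      intro m hm
      rw [Finset.mem_range] at hm
      exact mul_nonneg (hfnn _ (htm m (le_of_lt hm))) (abs_nonneg _)
    have : min g0 gl ≤ (if t M = 0 then g0 else gl) := by
      split <;> [exact min_le_left _ _; exact min_le_right _ _]
    linarith
  -- upper bound: a chain to 0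
  obtain ⟨M0, t0, ht00, htm0, hstep0, htM0, hcost0⟩ :=
    edge_chain_exists (y := (0:ℝ)) hf hUC hhpos hhδ hx h0m
  have hmem0 : ((∑ m ∈ Finset.range M0, f (t0 m) * |t0 (m+1) - t0 m|) + g0)
      ∈ edgeChainCosts l h f g0 gl x := by
    refine ⟨M0, t0, ht00, htm0, hstep0, Or.inl htM0, ?_⟩
    rw [if_pos htM0]
  obtain ⟨Ml, tl, htl0, html, hstepl, htMl, hcostl⟩ :=
    edge_chain_exists (y := l) hf hUC hhpos hhδ hx hlm
  have hmeml : ((∑ m ∈ Finset.range Ml, f (tl m) * |tl (m+1) - tl m|) + gl)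
      ∈ edgeChainCosts l h f g0 gl x := by
    refine ⟨Ml, tl, htl0, html, hstepl, Or.inr htMl, ?_⟩
    rw [if_neg (by rw [htMl]; exact hl.ne')]
  have hne : (edgeChainCosts l h f g0 gl x).Nonempty := ⟨_, hmem0⟩
  -- upper bound for sInf
  have hupper : sInf (edgeChainCosts l h f g0 gl x) ≤ u + ε * K := by
    have hb0 : sInf (edgeChainCosts l h f g0 gl x)
        ≤ (g0 + ∫ s in (0:ℝ)..x, f s) + ε * l := by
      refine le_trans (csInf_le hbdd hmem0) ?_
      have : (∫ s in (min x 0)..(max x 0), f s) + ε * |0 - x| =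
          (∫ s in (0:ℝ)..x, f s) + ε * x := by
        rw [min_eq_right hx.1, max_eq_left hx.1, zero_sub, abs_neg, abs_of_nonneg hx.1]
      rw [this] at hcost0
      have : ε * x ≤ ε * l := by gcongr; exact hx.2
      linarith
    have hbl : sInf (edgeChainCosts l h f g0 gl x)
        ≤ (gl + ∫ s in x..l, f s) + ε * l := by
      refine le_trans (csInf_le hbdd hmeml) ?_
      have : (∫ s in (min x l)..(max x l), f s) + ε * |l - x| =
          (∫ s in x..l, f s) + ε * (l - x) := by
        rw [min_eq_left hx.2, max_eq_right hx.2, abs_of_nonneg (by linarith [hx.2])]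
      rw [this] at hcostl
      have : ε * (l - x) ≤ ε * l := by gcongr <;> linarith [hx.1]
      linarith
    have hεl : ε * l ≤ ε * K := by gcongr; exact le_max_left _ _
    rcases le_total (g0 + ∫ s in (0:ℝ)..x, f s) (gl + ∫ s in x..l, f s) with hm | hm
    · rw [hu, min_eq_left hm]; linarith
    · rw [hu, min_eq_right hm]; linarith
  -- u is bounded above
  have hIsplit : (∫ s in (0:ℝ)..x, f s) + (∫ s in x..l, f s) = I :=
    intervalIntegral.integral_add_adjacent_intervals
      (hf.intervalIntegrable _ _) (hf.intervalIntegrable _ _)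
  have hxlnn : 0 ≤ ∫ s in x..l, f s := by
    apply intervalIntegral.integral_nonneg hx.2
    intro s hs
    exact hfnn s ⟨le_trans hx.1 hs.1, hs.2⟩
  have humax : u ≤ max g0 gl + I := by
    have h1 : u ≤ g0 + ∫ s in (0:ℝ)..x, f s := min_le_left _ _
    have h2 : (∫ s in (0:ℝ)..x, f s) ≤ I := by linarith
    have := le_max_left g0 gl
    linarith
  -- lower bound for sInf
  have hlower : u - ε * K ≤ sInf (edgeChainCosts l h f g0 gl x) := by
    apply le_csInf hne
    rintro r ⟨M, t, ht0, htm, hstep, hend, rfl⟩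
    obtain ⟨k1, k2, k3⟩ := edge_chain_lower hf hfη hη.le hUC hhδ htm hstep
    set L : ℝ := ∑ m ∈ Finset.range M, |t (m+1) - t m| with hLdef
    set S : ℝ := ∑ m ∈ Finset.range M, f (t m) * |t (m+1) - t m| with hSdef
    have hgT : min g0 gl ≤ (if t M = 0 then g0 else gl) := by
      split <;> [exact min_le_left _ _; exact min_le_right _ _]
    have hgT' : (if t M = 0 then g0 else gl) ≤ max g0 gl := by
      split <;> [exact le_max_left _ _; exact le_max_right _ _]
    by_cases hr : S + (if t M = 0 then g0 else gl) ≤ max g0 gl + I + 1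
    · -- the chain is short, so the Riemann-sum error is controlled
      have hLL0 : L ≤ L0 := by
        rw [hL0, le_div_iff₀ hη]
        have : η * L ≤ S := k1
        nlinarith
      have hεL : ε * L ≤ ε * K := by
        apply mul_le_mul_of_nonneg_left _ hεpos.le
        exact le_trans hLL0 (le_max_right _ _)
      rcases hend with h0 | hle
      · rw [if_pos h0]
        rw [h0, ht0] at k3
        have humin : u ≤ g0 + ∫ s in (0:ℝ)..x, f s := min_le_left _ _
        linarith
      · rw [if_neg (by rw [hle]; exact hl.ne')]
        rw [hle, ht0] at k2
        have humin : u ≤ gl + ∫ s in x..l, f s := min_le_right _ _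
        linarith
    · push_neg at hr
      have : 0 ≤ ε * K := by positivity
      linarith
  -- conclude
  rw [Real.dist_eq, abs_sub_lt_iff]
  constructor
  · linarith
  · have hεl' : ε * l ≤ ε * K := by
      apply mul_le_mul_of_nonneg_left (le_max_left _ _) hεpos.le
    linarith
end
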